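/- arXiv:2006.07893 — 2 statements merged into one kernel-verified Lean document; each statement's English description precedes it below -/
import Mathlib

section
/- (Giambelli formula in the Laksov–Thorup module) Let ∧ʳV(c) be made a Bᵣ(c)-module by letting hᵢ act as the i-th component σᵢ of the Schubert derivation σ₊(z) (the HS-derivation whose restriction to V(c) is multiplication by Xⁱ). Then for every partition λ = (λ₁ ≥ ... ≥ λᵣ ≥ 0), [X(c)]ʳ_λ := X^{r-1+λ₁}(c) ∧ ⋯ ∧ X^{λᵣ}(c) equals Δ_λ(Hᵣ(c)) · [X(c)]ʳ₀, where Δ_λ(Hᵣ(c)) = det(h_{λⱼ+i-j}(c))_{1≤i,j≤r} is the Schur determinant in the deformed complete symmetric functions hₖ(c), and [X(c)]ʳ₀ = X^{r-1}(c) ∧ ⋯ ∧ X⁰(c). -/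
open PowerSeries Polynomial

set_option synthInstance.maxHeartbeats 1000000
set_option maxHeartbeats 1000000

noncomputable section

abbrev B0 (n : ℕ) : Type := MvPolynomial (Fin n) ℚ
abbrev Br (n r : ℕ) : Type := MvPolynomial (Fin r) (B0 n)

def cc (n : ℕ) : ℕ → B0 n
  | 0 => 1
  | i + 1 => if h : i < n then MvPolynomial.X ⟨i, h⟩ else 0

def ee (n r : ℕ) : ℕ → Br n r
  | 0 => 1
  | i + 1 => if h : i < r then MvPolynomial.X ⟨i, h⟩ else 0

/-- c(z) = ∑ (-1)^i cᵢ zⁱ, viewed over Bᵣ -/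
def cser (n r : ℕ) : PowerSeries (Br n r) :=
  PowerSeries.mk fun i => (-1) ^ i * MvPolynomial.C (cc n i)

/-- Eᵣ(z) = ∑ (-1)^i eᵢ zⁱ -/
def Eser (n r : ℕ) : PowerSeries (Br n r) :=
  PowerSeries.mk fun i => (-1) ^ i * ee n r i

/-- H(z) = 1/Eᵣ(z) -/
def Hser (n r : ℕ) : PowerSeries (Br n r) := (Eser n r).invOfUnit 1

/-- hⱼ : coefficient of zʲ in 1/Eᵣ(z) -/
def hpl (n r : ℕ) (j : ℕ) : Br n r := PowerSeries.coeff j (Hser n r)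

/-- hⱼ(c) : coefficient of zʲ in c(z)/Eᵣ(z) -/
def hcc (n r : ℕ) (j : ℕ) : Br n r := PowerSeries.coeff j (cser n r * Hser n r)

def hplZ (n r : ℕ) (j : ℤ) : Br n r := if 0 ≤ j then hpl n r j.toNat else 0
def hccZ (n r : ℕ) (j : ℤ) : Br n r := if 0 ≤ j then hcc n r j.toNat else 0

/-- the ideal I_{r,n}(c) = (h_{n-r+1}(c),…,hₙ(c)) -/
def Irn (n r : ℕ) : Ideal (Br n r) := Ideal.span (hcc n r '' Set.Icc (n - r + 1) n)

/-- Xʲ(c) = ∑ᵢ (-1)ⁱ cᵢ X^{j-i} -/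
def Xc (n : ℕ) (j : ℕ) : Polynomial (B0 n) :=
  ∑ i ∈ Finset.range (j + 1),
    (-1 : Polynomial (B0 n)) ^ i * Polynomial.C (cc n i) * Polynomial.X ^ (j - i)

/-- the Schur determinant Δ_λ(Hᵣ(c)) -/
def Dl (n r : ℕ) (lam : Fin r → ℕ) : Br n r :=
  Matrix.det (Matrix.of fun i j : Fin r => hccZ n r ((lam j : ℤ) + (i : ℤ) - (j : ℤ)))

abbrev ExtA (n : ℕ) : Type := ExteriorAlgebra (B0 n) (Polynomial (B0 n))

def wedge (n r : ℕ) (g : Fin r → Polynomial (B0 n)) : ExtA n :=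
  ExteriorAlgebra.ιMulti (B0 n) r g

/-- the Laksov–Thorup module structure: eᵢ acts as the component σ̄ᵢ of the
inverse Schubert derivation, i.e. `σ̄(z)(v₁∧⋯∧vᵣ) = ∏ (vⱼ - X·vⱼ z)`. -/
def ActSpec (n r : ℕ)
    (act : Br n r →ₐ[B0 n] Module.End (B0 n) (ExtA n)) : Prop :=
  ∀ (i : Fin r) (g : Fin r → Polynomial (B0 n)),
    act (MvPolynomial.X i) (wedge n r g) =
      ∑ S ∈ Finset.powersetCard ((i : ℕ) + 1) (Finset.univ : Finset (Fin r)),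
        wedge n r fun j => if j ∈ S then Polynomial.X * g j else g j

end

noncomputable section
open MvPolynomial

def phi (n r : ℕ) : Br n r →ₐ[B0 n] Br n r :=
  MvPolynomial.aeval (fun i : Fin r => MvPolynomial.esymm (Fin r) (B0 n) ((i:ℕ)+1))

def toY (n r : ℕ) (i : Fin r) : Polynomial (B0 n) →ₐ[B0 n] Br n r :=
  Polynomial.aeval (MvPolynomial.X i)

def Lam (n r : ℕ) (g : Fin r → Polynomial (B0 n)) : Br n r →ₗ[B0 n] ExtA n :=
  (MvPolynomial.basisMonomials (Fin r) (B0 n)).constr (B0 n)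
    (fun m : Fin r →₀ ℕ => wedge n r fun j => Polynomial.X ^ (m j) * g j)

lemma Lam_monomial (n r : ℕ) (g : Fin r → Polynomial (B0 n)) (m : Fin r →₀ ℕ) (b : B0 n) :
    Lam n r g (MvPolynomial.monomial m b) = b • wedge n r (fun j => Polynomial.X ^ (m j) * g j) := by
  have h1 : (MvPolynomial.monomial m b : Br n r) = b • MvPolynomial.monomial m 1 := by
    rw [MvPolynomial.smul_monomial, smul_eq_mul, mul_one]
  rw [h1, map_smul]
  congr 1
  conv_lhs => rw [show (MvPolynomial.monomial m (1 : B0 n)) =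
    (MvPolynomial.basisMonomials (Fin r) (B0 n)) m from by
      rw [MvPolynomial.coe_basisMonomials]]
  exact (MvPolynomial.basisMonomials _ _).constr_basis _ _ m

end

noncomputable section
open MvPolynomial

lemma prod_monomial {n r : ℕ} {ι : Type*} (s : Finset ι) (d : ι → (Fin r →₀ ℕ)) (c : ι → B0 n) :
    ∏ j ∈ s, (MvPolynomial.monomial (d j) (c j) : Br n r)
      = MvPolynomial.monomial (∑ j ∈ s, d j) (∏ j ∈ s, c j) := by
  classical
  induction s using Finset.induction_on with
  | empty => simp [MvPolynomial.monomial_zero']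
  | insert a s' h ih =>
                   rw [Finset.prod_insert h, ih, Finset.sum_insert h, Finset.prod_insert h,
                     MvPolynomial.monomial_mul]

lemma sum_single_apply {r : ℕ} (k : Fin r → ℕ) (j : Fin r) :
    (∑ j' : Fin r, Finsupp.single j' (k j')) j = k j := by
  rw [Finsupp.finset_sum_apply]
  simp [Finsupp.single_apply]

lemma Lam_prod_toY (n r : ℕ) (g f : Fin r → Polynomial (B0 n)) :
    Lam n r g (∏ j, toY n r j (f j)) = wedge n r (fun j => f j * g j) := by
  classical
  have hf : ∀ j, toY n r j (f j)
      = ∑ k ∈ (f j).support, MvPolynomial.monomial (Finsupp.single j k) ((f j).coeff k) := by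
    intro j
    conv_lhs => rw [(f j).as_sum_support]
    rw [map_sum]
    refine Finset.sum_congr rfl fun k _ => ?_
    rw [toY, Polynomial.aeval_monomial, MvPolynomial.X_pow_eq_monomial,
      MvPolynomial.algebraMap_eq, MvPolynomial.C_mul_monomial, mul_one]
  have hg : ∀ j, f j * g j = ∑ k ∈ (f j).support, (f j).coeff k • (Polynomial.X ^ k * g j) := by
    intro j
    conv_lhs => rw [(f j).as_sum_support]
    rw [Finset.sum_mul]
    refine Finset.sum_congr rfl fun k _ => ?_
    rw [← Polynomial.smul_X_eq_monomial, smul_mul_assoc]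
  calc Lam n r g (∏ j, toY n r j (f j))
      = Lam n r g (∑ p ∈ Fintype.piFinset (fun j => (f j).support),
          MvPolynomial.monomial (∑ j, Finsupp.single j (p j)) (∏ j, (f j).coeff (p j))) := by
        rw [Finset.prod_congr rfl (fun j _ => hf j), Finset.prod_univ_sum]
        refine congrArg _ (Finset.sum_congr rfl fun p _ => ?_)
        rw [prod_monomial]
    _ = ∑ p ∈ Fintype.piFinset (fun j => (f j).support),
          (∏ j, (f j).coeff (p j)) • wedge n r (fun j => Polynomial.X ^ (p j) * g j) := by
        rw [map_sum]
        refine Finset.sum_congr rfl fun p _ => ?_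
        rw [Lam_monomial]
        congr 2
        funext j
        rw [sum_single_apply]
    _ = wedge n r (fun j => f j * g j) := by
        conv_rhs => rw [show (fun j => f j * g j) = fun j => ∑ k ∈ (f j).support,
          (f j).coeff k • (Polynomial.X ^ k * g j) from funext hg]
        rw [wedge]
        rw [show (ExteriorAlgebra.ιMulti (B0 n) r) (fun j => ∑ k ∈ (f j).support,
          (f j).coeff k • (Polynomial.X ^ k * g j)) = (ExteriorAlgebra.ιMulti (B0 n) r).toMultilinearMap
            (fun j => ∑ k ∈ (f j).support, (f j).coeff k • (Polynomial.X ^ k * g j)) from rfl]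
        rw [MultilinearMap.map_sum_finset]
        refine Finset.sum_congr rfl fun p _ => ?_
        rw [MultilinearMap.map_smul_univ]
        rfl

end

noncomputable section
open MvPolynomial

lemma monomial_one_eq_prod {n r : ℕ} (m : Fin r →₀ ℕ) :
    (MvPolynomial.monomial m 1 : Br n r) = ∏ j, MvPolynomial.X j ^ m j := by
  rw [MvPolynomial.monomial_eq, map_one, one_mul]
  rw [Finsupp.prod_fintype]
  intro i; exact pow_zero _

lemma Lam_mul_prod (n r : ℕ) (g f : Fin r → Polynomial (B0 n)) (q : Br n r) :
    Lam n r g (q * ∏ j, toY n r j (f j)) = Lam n r (fun j => f j * g j) q := by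
  have h : (Lam n r g).comp (LinearMap.mulRight (B0 n) (∏ j, toY n r j (f j)))
      = Lam n r (fun j => f j * g j) := by
    apply (MvPolynomial.basisMonomials (Fin r) (B0 n)).ext
    intro m
    have hb : (MvPolynomial.basisMonomials (Fin r) (B0 n)) m
        = MvPolynomial.monomial m (1 : B0 n) := by
      rw [MvPolynomial.coe_basisMonomials]
    rw [hb, LinearMap.comp_apply, LinearMap.mulRight_apply]
    have : (MvPolynomial.monomial m (1 : B0 n)) * ∏ j, toY n r j (f j)
        = ∏ j, toY n r j (Polynomial.X ^ m j * f j) := by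
      rw [monomial_one_eq_prod, ← Finset.prod_mul_distrib]
      refine Finset.prod_congr rfl fun j _ => ?_
      rw [map_mul, map_pow, toY, Polynomial.aeval_X]
    rw [this, Lam_prod_toY, Lam_monomial, one_smul]
    congr 1
    funext j
    rw [mul_assoc]
  calc Lam n r g (q * ∏ j, toY n r j (f j))
      = ((Lam n r g).comp (LinearMap.mulRight (B0 n) (∏ j, toY n r j (f j)))) q := rfl
    _ = Lam n r (fun j => f j * g j) q := by rw [h]

lemma Lam_modify (n r : ℕ) (g : Fin r → Polynomial (B0 n)) (S : Finset (Fin r)) (q : Br n r) :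
    Lam n r (fun j => if j ∈ S then Polynomial.X * g j else g j) q
      = Lam n r g (q * ∏ j ∈ S, MvPolynomial.X j) := by
  classical
  have h1 : ∏ j ∈ S, (MvPolynomial.X j : Br n r)
      = ∏ j, toY n r j (if j ∈ S then Polynomial.X else 1) := by
    rw [show (fun j => toY n r j (if j ∈ S then Polynomial.X else 1))
        = fun j => if j ∈ S then (MvPolynomial.X j : Br n r) else 1 from
      funext fun j => by split <;> simp [toY]]
    rw [Finset.prod_ite_mem, Finset.univ_inter]
  rw [h1, Lam_mul_prod]
  have h2 : (fun j => if j ∈ S then Polynomial.X * g j else g j)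
      = fun j => (if j ∈ S then Polynomial.X else (1 : Polynomial (B0 n))) * g j := by
    funext j
    split <;> simp
  rw [h2]

end


noncomputable section
open MvPolynomial

lemma act_wedge (n r : ℕ) (act : Br n r →ₐ[B0 n] Module.End (B0 n) (ExtA n))
    (hact : ActSpec n r act) (p : Br n r) :
    ∀ g : Fin r → Polynomial (B0 n), act p (wedge n r g) = Lam n r g (phi n r p) := by
  induction p using MvPolynomial.induction_on with
  | C a =>
    intro g
    rw [← MvPolynomial.algebraMap_eq, AlgHom.commutes, AlgHom.commutes,
      Module.algebraMap_end_apply, MvPolynomial.algebraMap_eq]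
    have hC : (MvPolynomial.C a : Br n r) = MvPolynomial.monomial 0 a :=
      (congrFun MvPolynomial.monomial_zero' a).symm
    rw [hC, Lam_monomial,
      show (fun j => Polynomial.X ^ ((0 : Fin r →₀ ℕ) j) * g j) = g from
        funext fun j => by simp]
  | add p q hp hq =>
    intro g
    rw [map_add, map_add, LinearMap.add_apply, hp g, hq g, map_add]
  | mul_X p i hp =>
    intro g
    rw [map_mul, Module.End.mul_apply, hact i g, map_sum]
    have step : ∀ S ∈ Finset.powersetCard ((i : ℕ) + 1) (Finset.univ : Finset (Fin r)),
        act p (wedge n r fun j => if j ∈ S then Polynomial.X * g j else g j)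
          = Lam n r g (phi n r p * ∏ j ∈ S, MvPolynomial.X j) := by
      intro S _
      rw [hp _, Lam_modify]
    rw [Finset.sum_congr rfl step, ← map_sum, ← Finset.mul_sum]
    congr 1
    rw [map_mul]
    congr 1
    rw [phi, MvPolynomial.aeval_X]
    rfl

end


noncomputable section
open MvPolynomial

lemma rename_toY (n r : ℕ) (σ : Equiv.Perm (Fin r)) (i : Fin r) (p : Polynomial (B0 n)) :
    MvPolynomial.rename σ (toY n r i p) = toY n r (σ i) p := by
  rw [toY, toY, ← MvPolynomial.rename_X σ i, Polynomial.aeval_algHom_apply]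

lemma Lam_rename (n r : ℕ) (σ : Equiv.Perm (Fin r)) (q : Br n r) :
    Lam n r (fun _ => 1) (MvPolynomial.rename σ q)
      = ((Equiv.Perm.sign σ : ℤˣ) : ℤ) • Lam n r (fun _ => 1) q := by
  have h : (Lam n r (fun _ => 1)).comp
        ((MvPolynomial.rename σ : Br n r →ₐ[B0 n] Br n r).toLinearMap)
      = ((Equiv.Perm.sign σ : ℤˣ) : ℤ) • Lam n r (fun _ => (1 : Polynomial (B0 n))) := by
    apply (MvPolynomial.basisMonomials (Fin r) (B0 n)).ext
    intro m
    have hb : (MvPolynomial.basisMonomials (Fin r) (B0 n)) m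
        = MvPolynomial.monomial m (1 : B0 n) := by
      rw [MvPolynomial.coe_basisMonomials]
    rw [hb, LinearMap.comp_apply, AlgHom.toLinearMap_apply, MvPolynomial.rename_monomial,
      Lam_monomial, one_smul, LinearMap.smul_apply, Lam_monomial, one_smul]
    have hv : (fun j => Polynomial.X ^ (Finsupp.mapDomain σ m) j * (1 : Polynomial (B0 n)))
        = (fun j => Polynomial.X ^ m j * (1 : Polynomial (B0 n))) ∘ ⇑σ.symm := by
      funext j
      simp only [Function.comp_apply]
      rw [Finsupp.mapDomain_equiv_apply]
    rw [wedge, hv, AlternatingMap.map_perm, wedge, Units.smul_def, Equiv.Perm.sign_symm]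
  calc Lam n r (fun _ => 1) (MvPolynomial.rename σ q)
      = ((Lam n r (fun _ => 1)).comp
          ((MvPolynomial.rename σ : Br n r →ₐ[B0 n] Br n r).toLinearMap)) q := rfl
    _ = _ := by rw [h, LinearMap.smul_apply]

lemma Lam_sym_det (n r : ℕ) (s : Br n r)
    (hs : ∀ σ : Equiv.Perm (Fin r), MvPolynomial.rename σ s = s)
    (f : Fin r → Polynomial (B0 n)) :
    Lam n r (fun _ => 1) (s * (Matrix.of fun i j => toY n r i (f j)).det)
      = r.factorial • Lam n r (fun _ => 1) (s * ∏ j, toY n r j (f j)) := by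
  rw [Matrix.det_apply]
  have hterm : ∀ σ : Equiv.Perm (Fin r),
      s * (Equiv.Perm.sign σ • ∏ i, (Matrix.of fun i j => toY n r i (f j)) (σ i) i)
        = ((Equiv.Perm.sign σ : ℤˣ) : ℤ) •
            MvPolynomial.rename σ (s * ∏ j, toY n r j (f j)) := by
    intro σ
    rw [map_mul, hs σ, map_prod]
    rw [show (∏ j, MvPolynomial.rename σ (toY n r j (f j)))
      = ∏ i, (Matrix.of fun i j => toY n r i (f j)) (σ i) i from
      Finset.prod_congr rfl fun j _ => by rw [rename_toY]; rfl]
    rw [Units.smul_def, zsmul_eq_mul, zsmul_eq_mul]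
    ring
  rw [Finset.mul_sum, Finset.sum_congr rfl fun σ _ => hterm σ, map_sum]
  have hterm2 : ∀ σ : Equiv.Perm (Fin r),
      Lam n r (fun _ => 1) (((Equiv.Perm.sign σ : ℤˣ) : ℤ) •
          MvPolynomial.rename σ (s * ∏ j, toY n r j (f j)))
        = Lam n r (fun _ => 1) (s * ∏ j, toY n r j (f j)) := by
    intro σ
    rw [map_zsmul, Lam_rename, smul_smul, ← Units.val_mul, Int.units_mul_self, Units.val_one,
      one_smul]
  rw [Finset.sum_congr rfl fun σ _ => hterm2 σ, Finset.sum_const, Finset.card_univ,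
    Fintype.card_perm, Fintype.card_fin]

end


noncomputable section
open MvPolynomial

def geom (n r : ℕ) (y : Br n r) : PowerSeries (Br n r) := PowerSeries.mk fun k => y ^ k

lemma one_sub_mul_geom (n r : ℕ) (y : Br n r) :
    (1 - PowerSeries.C y * PowerSeries.X) * geom n r y = 1 := by
  ext k
  rw [sub_mul, one_mul, map_sub, mul_assoc, PowerSeries.coeff_C_mul]
  cases k with
  | zero =>
    rw [PowerSeries.coeff_zero_X_mul, geom, PowerSeries.coeff_mk]
    simp
  | succ k =>
    rw [PowerSeries.coeff_succ_X_mul, geom, PowerSeries.coeff_mk, PowerSeries.coeff_mk,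
      PowerSeries.coeff_one, pow_succ]
    simp [mul_comm]

def esE (n r : ℕ) (i : Fin r) (k : ℕ) : Br n r :=
  ∑ S ∈ Finset.powersetCard k (Finset.univ.erase i), ∏ x ∈ S, MvPolynomial.X x

lemma coeff_prod_one_sub (n r : ℕ) (s : Finset (Fin r)) (k : ℕ) :
    PowerSeries.coeff k
        (∏ l ∈ s, (1 - PowerSeries.C (MvPolynomial.X l : Br n r) * PowerSeries.X))
      = (-1) ^ k * ∑ S ∈ Finset.powersetCard k s, ∏ x ∈ S, MvPolynomial.X x := by
  classical
  have h1 : ∀ l ∈ s, (1 - PowerSeries.C (MvPolynomial.X l : Br n r) * PowerSeries.X)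
      = (-(PowerSeries.C (MvPolynomial.X l : Br n r) * PowerSeries.X)) + 1 := by
    intro l _; ring
  rw [Finset.prod_congr rfl h1, Finset.prod_add]
  have h2 : ∀ t : Finset (Fin r), t ⊆ s →
      (∏ l ∈ t, (-(PowerSeries.C (MvPolynomial.X l : Br n r) * PowerSeries.X)))
          * ∏ l ∈ s \ t, (1 : PowerSeries (Br n r))
        = PowerSeries.C ((-1) ^ t.card * ∏ x ∈ t, MvPolynomial.X x)
            * PowerSeries.X ^ t.card := by
    intro t _
    rw [Finset.prod_const_one, mul_one]
    calc ∏ l ∈ t, (-(PowerSeries.C (MvPolynomial.X l : Br n r) * PowerSeries.X))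
        = ∏ l ∈ t, (((-1) * PowerSeries.C (MvPolynomial.X l : Br n r)) * PowerSeries.X) := by
          refine Finset.prod_congr rfl fun l _ => by ring
      _ = (∏ l ∈ t, ((-1) * PowerSeries.C (MvPolynomial.X l : Br n r)))
            * PowerSeries.X ^ t.card := by
          rw [Finset.prod_mul_distrib, Finset.prod_const]
      _ = _ := by
          rw [Finset.prod_mul_distrib, Finset.prod_const, ← map_prod, map_mul, map_pow,
            map_neg, map_one]
  rw [Finset.sum_congr rfl (fun t ht => h2 t (Finset.mem_powerset.mp ht)), map_sum]
  have h3 : ∀ t : Finset (Fin r),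
      PowerSeries.coeff k
          (PowerSeries.C ((-1) ^ t.card * ∏ x ∈ t, MvPolynomial.X x : Br n r)
            * PowerSeries.X ^ t.card)
        = if t.card = k then (-1) ^ k * ∏ x ∈ t, MvPolynomial.X x else 0 := by
    intro t
    rw [PowerSeries.coeff_C_mul, PowerSeries.coeff_X_pow]
    by_cases h : t.card = k
    · subst h; simp
    · simp [h, Ne.symm h]
  rw [Finset.sum_congr rfl (fun t _ => h3 t), Finset.powersetCard_eq_filter, Finset.mul_sum,
    ← Finset.sum_filter]

end

noncomputable section
open MvPolynomial

lemma phi_C (n r : ℕ) (a : B0 n) : phi n r (MvPolynomial.C a) = MvPolynomial.C a := by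
  rw [← MvPolynomial.algebraMap_eq, AlgHom.commutes, MvPolynomial.algebraMap_eq]

lemma phi_ee (n r : ℕ) (k : ℕ) : phi n r (ee n r k) = MvPolynomial.esymm (Fin r) (B0 n) k := by
  cases k with
  | zero => rw [show ee n r 0 = 1 from rfl, map_one, MvPolynomial.esymm_zero]
  | succ i =>
    rw [show ee n r (i+1) = if h : i < r then MvPolynomial.X ⟨i, h⟩ else 0 from rfl]
    by_cases h : i < r
    · rw [dif_pos h, phi, MvPolynomial.aeval_X]
    · rw [dif_neg h, map_zero, MvPolynomial.esymm,
        Finset.powersetCard_eq_empty.mpr (by simpa using by omega : (Finset.univ : Finset (Fin r)).card < i + 1),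
        Finset.sum_empty]

lemma map_phi_Eser (n r : ℕ) :
    PowerSeries.map (phi n r).toRingHom (Eser n r)
      = ∏ l, (1 - PowerSeries.C (MvPolynomial.X l : Br n r) * PowerSeries.X) := by
  ext k
  rw [PowerSeries.coeff_map, coeff_prod_one_sub, Eser, PowerSeries.coeff_mk]
  simp only [AlgHom.toRingHom_eq_coe, RingHom.coe_coe]
  rw [map_mul, map_pow, map_neg, map_one, phi_ee, MvPolynomial.esymm]

lemma constCoeff_Eser (n r : ℕ) :
    PowerSeries.constantCoeff (Eser n r) = 1 := by
  rw [← PowerSeries.coeff_zero_eq_constantCoeff, Eser, PowerSeries.coeff_mk]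
  rw [show ee n r 0 = 1 from rfl]
  ring

lemma Eser_mul_Hser (n r : ℕ) : Eser n r * Hser n r = 1 :=
  PowerSeries.mul_invOfUnit _ 1 (by rw [constCoeff_Eser]; rfl)

lemma hccZ_coe (n r : ℕ) (a m : ℕ) (h : a ≤ m) :
    hccZ n r ((m : ℤ) - (a : ℤ)) = hcc n r (m - a) := by
  rw [hccZ, if_pos (by omega)]
  congr 1
  omega

lemma hccZ_neg (n r : ℕ) (t : ℤ) (h : t < 0) : hccZ n r t = 0 := by
  rw [hccZ, if_neg (by omega)]

lemma esE_zero (n r : ℕ) (i : Fin r) (a : ℕ) (h : r ≤ a) : esE n r i a = 0 := by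
  have hr : 0 < r := i.pos
  rw [esE, Finset.powersetCard_eq_empty.mpr, Finset.sum_empty]
  rw [Finset.card_erase_of_mem (Finset.mem_univ i), Finset.card_univ, Fintype.card_fin]
  omega

lemma EW (n r : ℕ) (i : Fin r) (m : ℕ) :
    toY n r i (Xc n m)
      = ∑ l : Fin r, ((-1 : Br n r) ^ (r - 1 - (l : ℕ)) * esE n r i (r - 1 - (l : ℕ)))
          * phi n r (hccZ n r ((m : ℤ) - ((r - 1 - (l : ℕ) : ℕ) : ℤ))) := by
  classical
  have hA : PowerSeries.map (phi n r).toRingHom (Eser n r)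
      = (1 - PowerSeries.C (MvPolynomial.X i : Br n r) * PowerSeries.X)
        * ∏ l ∈ Finset.univ.erase i,
            (1 - PowerSeries.C (MvPolynomial.X l : Br n r) * PowerSeries.X) := by
    rw [map_phi_Eser,
      ← Finset.mul_prod_erase Finset.univ
        (fun l => 1 - PowerSeries.C (MvPolynomial.X l : Br n r) * PowerSeries.X)
        (Finset.mem_univ i)]
  set A := ∏ l ∈ Finset.univ.erase i,
      (1 - PowerSeries.C (MvPolynomial.X l : Br n r) * PowerSeries.X) with hAdef
  set S := PowerSeries.map (phi n r).toRingHom (cser n r * Hser n r) with hSdef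
  have h1 : S * ((1 - PowerSeries.C (MvPolynomial.X i : Br n r) * PowerSeries.X) * A)
      = PowerSeries.map (phi n r).toRingHom (cser n r) := by
    rw [← hA, hSdef, ← map_mul]
    congr 1
    calc cser n r * Hser n r * Eser n r = cser n r * (Eser n r * Hser n r) := by ring
      _ = cser n r := by rw [Eser_mul_Hser, mul_one]
  have key : A * S
      = PowerSeries.map (phi n r).toRingHom (cser n r) * geom n r (MvPolynomial.X i) := by
    calc A * S = (S * ((1 - PowerSeries.C (MvPolynomial.X i : Br n r) * PowerSeries.X) * A))
          * geom n r (MvPolynomial.X i)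
          - S * A * ((1 - PowerSeries.C (MvPolynomial.X i : Br n r) * PowerSeries.X)
              * geom n r (MvPolynomial.X i) - 1) := by ring
      _ = _ := by rw [h1, one_sub_mul_geom, sub_self, mul_zero, sub_zero]
  have hT : toY n r i (Xc n m)
      = ∑ a ∈ Finset.range (m+1),
          ((-1 : Br n r)^a * MvPolynomial.C (cc n a)) * (MvPolynomial.X i)^(m-a) := by
    rw [Xc, map_sum]
    refine Finset.sum_congr rfl fun a _ => ?_
    simp only [toY, map_mul, map_pow, map_neg, map_one, Polynomial.aeval_X, Polynomial.aeval_C,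
      MvPolynomial.algebraMap_eq]
  have hco' : ∑ a ∈ Finset.range (m+1),
        ((-1 : Br n r)^a * esE n r i a) * phi n r (hcc n r (m-a))
      = ∑ a ∈ Finset.range (m+1),
          ((-1 : Br n r)^a * MvPolynomial.C (cc n a)) * (MvPolynomial.X i)^(m-a) := by
    calc ∑ a ∈ Finset.range (m+1),
          ((-1 : Br n r)^a * esE n r i a) * phi n r (hcc n r (m-a))
        = PowerSeries.coeff m (A * S) := by
          rw [PowerSeries.coeff_mul, Finset.Nat.sum_antidiagonal_eq_sum_range_succ_mk]
          refine Finset.sum_congr rfl fun a _ => ?_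
          rw [hAdef, coeff_prod_one_sub, hSdef, PowerSeries.coeff_map, esE, hcc]
          simp only [AlgHom.toRingHom_eq_coe, RingHom.coe_coe]
      _ = PowerSeries.coeff m
            (PowerSeries.map (phi n r).toRingHom (cser n r) * geom n r (MvPolynomial.X i)) := by
          rw [key]
      _ = _ := by
          rw [PowerSeries.coeff_mul, Finset.Nat.sum_antidiagonal_eq_sum_range_succ_mk]
          refine Finset.sum_congr rfl fun a _ => ?_
          rw [PowerSeries.coeff_map, cser, PowerSeries.coeff_mk, geom, PowerSeries.coeff_mk]
          simp only [AlgHom.toRingHom_eq_coe, RingHom.coe_coe, map_mul, map_pow, map_neg,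
            map_one, phi_C]
  calc toY n r i (Xc n m)
      = ∑ a ∈ Finset.range (m+1),
          ((-1 : Br n r)^a * esE n r i a) * phi n r (hcc n r (m-a)) := hT.trans hco'.symm
    _ = ∑ a ∈ Finset.range (m+1),
          ((-1 : Br n r)^a * esE n r i a) * phi n r (hccZ n r ((m:ℤ) - (a:ℤ))) := by
        refine Finset.sum_congr rfl fun a ha => ?_
        rw [hccZ_coe n r a m (by have := Finset.mem_range.mp ha; omega)]
    _ = ∑ a ∈ Finset.range (m+1+r),
          ((-1 : Br n r)^a * esE n r i a) * phi n r (hccZ n r ((m:ℤ) - (a:ℤ))) := by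
        refine Finset.sum_subset (Finset.range_subset_range.mpr (by omega)) ?_
        intro a _ ha
        rw [hccZ_neg n r _ (by simp only [Finset.mem_range] at ha; omega), map_zero, mul_zero]
    _ = ∑ a ∈ Finset.range r,
          ((-1 : Br n r)^a * esE n r i a) * phi n r (hccZ n r ((m:ℤ) - (a:ℤ))) := by
        refine (Finset.sum_subset (Finset.range_subset_range.mpr (by omega)) ?_).symm
        intro a _ ha
        rw [esE_zero n r i a (by simp only [Finset.mem_range] at ha; omega), mul_zero, zero_mul]
    _ = ∑ a ∈ Finset.range r,
          ((-1 : Br n r)^(r-1-a) * esE n r i (r-1-a))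
            * phi n r (hccZ n r ((m:ℤ) - ((r-1-a : ℕ):ℤ))) := by
        exact (Finset.sum_range_reflect
          (fun a => ((-1 : Br n r)^a * esE n r i a) * phi n r (hccZ n r ((m:ℤ) - (a:ℤ)))) r).symm
    _ = _ := by
        exact (Fin.sum_univ_eq_sum_range
          (fun a => ((-1 : Br n r)^(r-1-a) * esE n r i (r-1-a))
            * phi n r (hccZ n r ((m:ℤ) - ((r-1-a : ℕ):ℤ)))) r).symm

end

noncomputable section
open MvPolynomial

def EmatM (n r : ℕ) : Matrix (Fin r) (Fin r) (Br n r) :=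
  Matrix.of fun i l => (-1 : Br n r) ^ (r - 1 - (l:ℕ)) * esE n r i (r - 1 - (l:ℕ))

def HmatM (n r : ℕ) (lam : Fin r → ℕ) : Matrix (Fin r) (Fin r) (Br n r) :=
  Matrix.of fun l j => phi n r (hccZ n r ((lam j : ℤ) + (l:ℤ) - (j:ℤ)))

lemma Fmat_eq (n r : ℕ) (lam : Fin r → ℕ) :
    Matrix.of (fun i j : Fin r => toY n r i (Xc n (r - 1 - (j:ℕ) + lam j)))
      = EmatM n r * HmatM n r lam := by
  refine Matrix.ext fun i j => ?_
  rw [Matrix.mul_apply, Matrix.of_apply, EW n r i (r - 1 - (j:ℕ) + lam j)]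
  refine Finset.sum_congr rfl fun l _ => ?_
  rw [EmatM, HmatM, Matrix.of_apply, Matrix.of_apply]
  have hj : (j:ℕ) < r := j.isLt
  have hl : (l:ℕ) < r := l.isLt
  have harith : ((r - 1 - (j:ℕ) + lam j : ℕ) : ℤ) - ((r - 1 - (l:ℕ) : ℕ) : ℤ)
      = (lam j : ℤ) + (l:ℤ) - (j:ℤ) := by omega
  rw [harith]

lemma hcc_zero (n r : ℕ) : hcc n r 0 = 1 := by
  rw [hcc, PowerSeries.coeff_zero_eq_constantCoeff, map_mul]
  have h1 : PowerSeries.constantCoeff (cser n r) = 1 := by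
    rw [← PowerSeries.coeff_zero_eq_constantCoeff, cser, PowerSeries.coeff_mk]
    rw [show cc n 0 = 1 from rfl]
    simp
  have h2 : PowerSeries.constantCoeff (Hser n r) = 1 := by
    rw [Hser, PowerSeries.constantCoeff_invOfUnit, inv_one, Units.val_one]
  rw [h1, h2, mul_one]

lemma hccZ_zero (n r : ℕ) : hccZ n r 0 = 1 := by
  rw [hccZ, if_pos le_rfl, Int.toNat_zero, hcc_zero]

lemma det_Hmat_zero (n r : ℕ) : (HmatM n r (fun _ => 0)).det = 1 := by
  have h : (HmatM n r fun _ => 0).BlockTriangular OrderDual.toDual := by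
    intro l j hlt
    have hlj : (l:ℕ) < (j:ℕ) := hlt
    rw [HmatM, Matrix.of_apply, hccZ_neg n r _ (by push_cast; omega), map_zero]
  rw [Matrix.det_of_lowerTriangular _ h]
  have hdiag : ∀ l : Fin r, HmatM n r (fun _ => 0) l l = 1 := by
    intro l
    rw [HmatM, Matrix.of_apply]
    have : ((0:ℕ) : ℤ) + (l:ℤ) - (l:ℤ) = 0 := by omega
    rw [this, hccZ_zero, map_one]
  rw [Finset.prod_congr rfl fun l _ => hdiag l, Finset.prod_const_one]

lemma phi_Dl (n r : ℕ) (lam : Fin r → ℕ) :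
    phi n r (Dl n r lam) = (HmatM n r lam).det := by
  have h := RingHom.map_det (phi n r).toRingHom
    (Matrix.of fun i j : Fin r => hccZ n r ((lam j : ℤ) + (i:ℤ) - (j:ℤ)))
  simp only [AlgHom.toRingHom_eq_coe, RingHom.coe_coe] at h
  rw [Dl, h]
  rfl

lemma rename_phi (n r : ℕ) (σ : Equiv.Perm (Fin r)) (p : Br n r) :
    MvPolynomial.rename σ (phi n r p) = phi n r p := by
  have h : (MvPolynomial.rename (σ : Fin r → Fin r)).comp (phi n r) = phi n r := by
    apply MvPolynomial.algHom_ext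
    intro i
    rw [AlgHom.comp_apply, phi, MvPolynomial.aeval_X]
    exact MvPolynomial.rename_esymm (Fin r) (B0 n) _ σ
  calc MvPolynomial.rename (σ : Fin r → Fin r) (phi n r p)
      = ((MvPolynomial.rename (σ : Fin r → Fin r)).comp (phi n r)) p := rfl
    _ = phi n r p := by rw [h]

end

/-- Giambelli's formula [X(c)]ʳ_λ = Δ_λ(Hᵣ(c))·[X(c)]ʳ₀ in the
Laksov–Thorup Bᵣ(c)-module structure on ∧ʳV(c). -/
theorem stmt8 (n r : ℕ)
    (act : Br n r →ₐ[B0 n] Module.End (B0 n) (ExtA n)) (hact : ActSpec n r act)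
    (lam : Fin r → ℕ) (hlam : Antitone lam) :
    wedge n r (fun j => Xc n (r - 1 - (j : ℕ) + lam j)) =
      act (Dl n r lam) (wedge n r fun j => Xc n (r - 1 - (j : ℕ))) := by
  classical
  rw [act_wedge n r act hact (Dl n r lam)]
  have hg1 : (fun j : Fin r => Xc n (r - 1 - (j:ℕ)) * 1)
      = (fun j : Fin r => Xc n (r - 1 - (j:ℕ))) := funext fun j => mul_one _
  have hg2 : (fun j : Fin r => Xc n (r - 1 - (j:ℕ) + lam j) * 1)
      = (fun j : Fin r => Xc n (r - 1 - (j:ℕ) + lam j)) := funext fun j => mul_one _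
  have h1 : Lam n r (fun j => Xc n (r - 1 - (j:ℕ))) (phi n r (Dl n r lam))
      = Lam n r (fun _ => 1)
          (phi n r (Dl n r lam) * ∏ j, toY n r j (Xc n (r - 1 - (j:ℕ)))) := by
    rw [Lam_mul_prod, hg1]
  have h2 : wedge n r (fun j => Xc n (r - 1 - (j : ℕ) + lam j))
      = Lam n r (fun _ => 1) (∏ j, toY n r j (Xc n (r - 1 - (j:ℕ) + lam j))) := by
    rw [Lam_prod_toY, hg2]
  rw [h2, h1]
  have hfac : ∀ x y : ExtA n, r.factorial • x = r.factorial • y → x = y := by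
    intro x y h
    have hx : (r.factorial : ℚ) • x = (r.factorial : ℚ) • y := by
      rw [Nat.cast_smul_eq_nsmul, Nat.cast_smul_eq_nsmul, h]
    have hne : (r.factorial : ℚ) ≠ 0 := Nat.cast_ne_zero.mpr (Nat.factorial_ne_zero r)
    calc x = (r.factorial : ℚ)⁻¹ • ((r.factorial : ℚ) • x) := (inv_smul_smul₀ hne x).symm
      _ = (r.factorial : ℚ)⁻¹ • ((r.factorial : ℚ) • y) := by rw [hx]
      _ = y := inv_smul_smul₀ hne y
  apply hfac
  have hs : ∀ σ : Equiv.Perm (Fin r),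
      MvPolynomial.rename σ (phi n r (Dl n r lam)) = phi n r (Dl n r lam) :=
    fun σ => rename_phi n r σ _
  have hL := Lam_sym_det n r 1 (fun σ => map_one _)
    (fun j => Xc n (r - 1 - (j:ℕ) + lam j))
  have hR := Lam_sym_det n r (phi n r (Dl n r lam)) hs (fun j => Xc n (r - 1 - (j:ℕ)))
  beta_reduce at hL hR
  rw [one_mul] at hL
  conv at hL => rw [one_mul]
  rw [← hL, ← hR]
  congr 1
  rw [Fmat_eq n r lam]
  have hF0 : (Matrix.of fun i j : Fin r => toY n r i (Xc n (r - 1 - (j:ℕ))))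
      = EmatM n r * HmatM n r (fun _ => 0) := by
    have h := Fmat_eq n r (fun _ => 0)
    rw [show (fun i j : Fin r => toY n r i (Xc n (r - 1 - (j:ℕ) + 0)))
        = (fun i j : Fin r => toY n r i (Xc n (r - 1 - (j:ℕ)))) from by
      funext i j; rw [Nat.add_zero]] at h
    exact h
  rw [hF0, Matrix.det_mul, Matrix.det_mul, det_Hmat_zero, mul_one, phi_Dl]
  ring
end

section
/- (Main theorem, special case λ = 0, r = 3) In B₃ (with all cᵢ = 0 for simplicity, or general c), the generating function action satisfies ℰ(z,w⁻¹)·1 = (1/E₃(z))·(E₂(z) + (z/w)E₁(z) + z²/w²), where ℰ(z,w⁻¹)·1 is defined by (ℰ(z,w⁻¹)·1)[X]³₀ = ∑_{i,j≥0} zⁱw⁻ʲ · Xⁱ ∧ (∂ʲ ⌟ (X²∧X¹∧X⁰)). In particular the coefficient of z⁵w⁻¹ equals −Δ_{(3,1)}(H₃) = h₄ − h₁h₃. -/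
open PowerSeries Polynomial

set_option synthInstance.maxHeartbeats 1000000
set_option maxHeartbeats 1000000

noncomputable section
/-- E₂(z) = 1 - h₁z + (h₁² - h₂)z², inside B₃ (here all cᵢ = 0, i.e. n = 0). -/
def E2ser : PowerSeries (Br 0 3) :=
  PowerSeries.mk fun i =>
    if i = 0 then 1 else if i = 1 then -hpl 0 3 1
    else if i = 2 then hpl 0 3 1 ^ 2 - hpl 0 3 2 else 0

/-- E₁(z) = 1 - h₁z. -/
def E1ser : PowerSeries (Br 0 3) :=
  PowerSeries.mk fun i => if i = 0 then 1 else if i = 1 then -hpl 0 3 1 else 0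

/-- the coefficient of zⁱw⁻ʲ in (1/E₃(z))·(E₂(z) + (z/w)E₁(z) + z²/w²). -/
def coefRHS (i j : ℕ) : Br 0 3 :=
  if j = 0 then PowerSeries.coeff i (Hser 0 3 * E2ser)
  else if j = 1 then (if 1 ≤ i then PowerSeries.coeff (i - 1) (Hser 0 3 * E1ser) else 0)
  else if j = 2 then (if 2 ≤ i then PowerSeries.coeff (i - 2) (Hser 0 3) else 0)
  else 0
end

noncomputable section Stmt18Aux

abbrev eps1 : Br 0 3 := MvPolynomial.X 0
abbrev eps2 : Br 0 3 := MvPolynomial.X 1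
abbrev eps3 : Br 0 3 := MvPolynomial.X 2

lemma Eser_eq : Eser 0 3 = 1 - PowerSeries.C eps1 * PowerSeries.X ^ 1
    + PowerSeries.C eps2 * PowerSeries.X ^ 2 - PowerSeries.C eps3 * PowerSeries.X ^ 3 := by
  refine PowerSeries.ext fun n => ?_
  simp only [Eser, PowerSeries.coeff_mk, map_sub, map_add, PowerSeries.coeff_one,
    PowerSeries.coeff_C_mul_X_pow]
  match n with
  | 0 => simp [ee]
  | 1 => simp [ee]; try ring
  | 2 => simp [ee]; try ring
  | 3 => simp [ee]; try ring
  | (m+4) => simp [ee, show ¬ m + 3 < 3 by omega, show m + 4 ≠ 0 by omega,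
      show m + 4 ≠ 1 by omega, show m + 4 ≠ 2 by omega, show m + 4 ≠ 3 by omega]

lemma HE : Eser 0 3 * Hser 0 3 = 1 := by
  refine PowerSeries.mul_invOfUnit _ 1 ?_
  rw [← PowerSeries.coeff_zero_eq_constantCoeff_apply]
  simp [Eser, ee]

lemma coeff_sm (a : Br 0 3) (k n : ℕ) (f : PowerSeries (Br 0 3)) :
    PowerSeries.coeff n (PowerSeries.C a * PowerSeries.X ^ k * f) =
      if k ≤ n then a * PowerSeries.coeff (n - k) f else 0 := by
  rw [show PowerSeries.C a * PowerSeries.X ^ k * f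
      = f * PowerSeries.C a * PowerSeries.X ^ k by ring,
    PowerSeries.coeff_mul_X_pow']
  split
  · rw [PowerSeries.coeff_mul_C, mul_comm]
  · rfl

lemma hpl_key (n : ℕ) :
    hpl 0 3 n - eps1 * (if 1 ≤ n then hpl 0 3 (n-1) else 0)
      + eps2 * (if 2 ≤ n then hpl 0 3 (n-2) else 0)
      - eps3 * (if 3 ≤ n then hpl 0 3 (n-3) else 0) = if n = 0 then 1 else 0 := by
  have h := congrArg (PowerSeries.coeff n) HE
  rw [Eser_eq, sub_mul, add_mul, sub_mul, one_mul, map_sub, map_add, map_sub,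
    coeff_sm, coeff_sm, coeff_sm, PowerSeries.coeff_one] at h
  simp only [hpl]
  rw [← h]
  split <;> split <;> split <;> ring

lemma hpl_zero : hpl 0 3 0 = 1 := by simpa using hpl_key 0

lemma hpl_one : hpl 0 3 1 = eps1 := by
  have := hpl_key 1
  simp [hpl_zero] at this
  linear_combination this

lemma hpl_two : hpl 0 3 1 ^ 2 - hpl 0 3 2 = eps2 := by
  have := hpl_key 2
  simp [hpl_zero, hpl_one] at this
  rw [hpl_one]
  linear_combination -this

lemma hpl_two' : hpl 0 3 2 = eps1 * hpl 0 3 1 - eps2 := by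
  have := hpl_two
  rw [hpl_one] at this ⊢
  linear_combination -this

lemma hpl_rec (k : ℕ) : hpl 0 3 (k+3)
    = eps1 * hpl 0 3 (k+2) - eps2 * hpl 0 3 (k+1) + eps3 * hpl 0 3 k := by
  have := hpl_key (k+3)
  simp only [show (1:ℕ) ≤ k+3 by omega, show (2:ℕ) ≤ k+3 by omega, show (3:ℕ) ≤ k+3 by omega,
    if_true, show k+3-1 = k+2 by omega, show k+3-2 = k+1 by omega, show k+3-3 = k by omega,
    show k+3 ≠ 0 by omega, if_false] at this
  linear_combination this

lemma E2ser_eq : E2ser = 1 - PowerSeries.C (hpl 0 3 1) * PowerSeries.X ^ 1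
    + PowerSeries.C (hpl 0 3 1 ^ 2 - hpl 0 3 2) * PowerSeries.X ^ 2 := by
  set a := hpl 0 3 1 ^ 2 - hpl 0 3 2 with ha
  refine PowerSeries.ext fun n => ?_
  simp only [E2ser, PowerSeries.coeff_mk, map_sub, map_add, PowerSeries.coeff_one,
    PowerSeries.coeff_C_mul_X_pow]
  match n with
  | 0 => norm_num
  | 1 => norm_num
  | 2 => norm_num [ha]
  | (m+3) => simp [show m + 3 ≠ 0 by omega, show m + 3 ≠ 1 by omega, show m + 3 ≠ 2 by omega]

lemma E1ser_eq : E1ser = 1 - PowerSeries.C (hpl 0 3 1) * PowerSeries.X ^ 1 := by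
  refine PowerSeries.ext fun n => ?_
  simp only [E1ser, PowerSeries.coeff_mk, map_sub, PowerSeries.coeff_one,
    PowerSeries.coeff_C_mul_X_pow]
  match n with
  | 0 => norm_num
  | 1 => norm_num
  | (m+2) => simp [show m + 2 ≠ 0 by omega, show m + 2 ≠ 1 by omega]

lemma coeff_mul_quad (f : PowerSeries (Br 0 3)) (x y : Br 0 3) (n : ℕ) :
    PowerSeries.coeff n (f * (1 - PowerSeries.C x * PowerSeries.X ^ 1
        + PowerSeries.C y * PowerSeries.X ^ 2))
      = PowerSeries.coeff n f
        - x * (if 1 ≤ n then PowerSeries.coeff (n-1) f else 0)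
        + y * (if 2 ≤ n then PowerSeries.coeff (n-2) f else 0) := by
  rw [mul_add, mul_sub, mul_one,
    show f * (PowerSeries.C x * PowerSeries.X ^ 1) = PowerSeries.C x * PowerSeries.X ^ 1 * f by ring,
    show f * (PowerSeries.C y * PowerSeries.X ^ 2) = PowerSeries.C y * PowerSeries.X ^ 2 * f by ring,
    map_add, map_sub, coeff_sm, coeff_sm]
  split <;> split <;> ring

lemma coeff_mul_lin (f : PowerSeries (Br 0 3)) (x : Br 0 3) (n : ℕ) :
    PowerSeries.coeff n (f * (1 - PowerSeries.C x * PowerSeries.X ^ 1))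
      = PowerSeries.coeff n f
        - x * (if 1 ≤ n then PowerSeries.coeff (n-1) f else 0) := by
  rw [mul_sub, mul_one,
    show f * (PowerSeries.C x * PowerSeries.X ^ 1) = PowerSeries.C x * PowerSeries.X ^ 1 * f by ring,
    map_sub, coeff_sm]
  split <;> ring

lemma coeff_HE2 (n : ℕ) : PowerSeries.coeff n (Hser 0 3 * E2ser)
    = hpl 0 3 n - hpl 0 3 1 * (if 1 ≤ n then hpl 0 3 (n-1) else 0)
      + (hpl 0 3 1 ^ 2 - hpl 0 3 2) * (if 2 ≤ n then hpl 0 3 (n-2) else 0) := by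
  rw [E2ser_eq, coeff_mul_quad]
  simp only [hpl]

lemma coeff_HE1 (n : ℕ) : PowerSeries.coeff n (Hser 0 3 * E1ser)
    = hpl 0 3 n - hpl 0 3 1 * (if 1 ≤ n then hpl 0 3 (n-1) else 0) := by
  rw [E1ser_eq, coeff_mul_lin]
  simp only [hpl]

lemma cser_one : cser 0 3 = 1 := by
  refine PowerSeries.ext fun n => ?_
  simp only [cser, PowerSeries.coeff_mk, PowerSeries.coeff_one]
  match n with
  | 0 => simp [cc]
  | (m+1) => simp [cc]

lemma hcc_eq : hcc 0 3 = hpl 0 3 := by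
  funext j; rw [hcc, cser_one, one_mul, hpl]

lemma Dl_eq : Dl 0 3 ![3, 1, 0] = hpl 0 3 3 * hpl 0 3 1 - hpl 0 3 4 := by
  rw [Dl, Matrix.det_fin_three]
  simp [hccZ, hcc_eq, hplZ]
  try norm_num [hpl_zero]
  try ring

def wi (a b c : ℕ) : ExtA 0 :=
  ExteriorAlgebra.ι (B0 0) (Polynomial.X ^ a) * ExteriorAlgebra.ι (B0 0) (Polynomial.X ^ b)
    * ExteriorAlgebra.ι (B0 0) (Polynomial.X ^ c)

lemma iota_swap (x y : Polynomial (B0 0)) :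
    ExteriorAlgebra.ι (B0 0) x * ExteriorAlgebra.ι (B0 0) y
      = -(ExteriorAlgebra.ι (B0 0) y * ExteriorAlgebra.ι (B0 0) x) :=
  eq_neg_of_add_eq_zero_left (ExteriorAlgebra.ι_add_mul_swap x y)

lemma wi_xx (a c : ℕ) : wi a a c = 0 := by
  rw [wi, ExteriorAlgebra.ι_sq_zero, zero_mul]

lemma wi_yy (a b : ℕ) : wi a b b = 0 := by
  rw [wi, mul_assoc, ExteriorAlgebra.ι_sq_zero, mul_zero]

lemma wi_swap12 (a b c : ℕ) : wi b a c = -wi a b c := by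
  rw [wi, wi, iota_swap, neg_mul]

lemma wi_swap23 (a b c : ℕ) : wi a c b = -wi a b c := by
  rw [wi, wi, mul_assoc, mul_assoc, iota_swap, mul_neg]

lemma wi_xyx (a b : ℕ) : wi a b a = 0 := by
  have := wi_swap23 a a b
  rw [wi_xx] at this
  rw [← neg_zero, this]

lemma wedge_eq (g : Fin 3 → Polynomial (B0 0)) :
    wedge 0 3 g = ExteriorAlgebra.ι (B0 0) (g 0) * ExteriorAlgebra.ι (B0 0) (g 1)
      * ExteriorAlgebra.ι (B0 0) (g 2) := by
  rw [wedge, ExteriorAlgebra.ιMulti_apply]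
  simp [List.ofFn_succ, mul_assoc]

lemma pc1 : Finset.powersetCard 1 (Finset.univ : Finset (Fin 3))
    = {{0}, {1}, {2}} := by decide
lemma pc2 : Finset.powersetCard 2 (Finset.univ : Finset (Fin 3))
    = {{0, 1}, {0, 2}, {1, 2}} := by decide
lemma pc3 : Finset.powersetCard 3 (Finset.univ : Finset (Fin 3))
    = {{0, 1, 2}} := by decide

section
variable (act : Br 0 3 →ₐ[B0 0] Module.End (B0 0) (ExtA 0)) (hact : ActSpec 0 3 act)
include hact

lemma act_e1 (a b c : ℕ) :
    act eps1 (wi a b c) = wi (a+1) b c + wi a (b+1) c + wi a b (c+1) := by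
  have h := hact 0 ![Polynomial.X ^ a, Polynomial.X ^ b, Polynomial.X ^ c]
  rw [show ((0 : Fin 3) : ℕ) + 1 = 1 from rfl, pc1, Finset.sum_insert (by decide),
    Finset.sum_insert (by decide), Finset.sum_singleton] at h
  simp only [wedge_eq, Matrix.cons_val_zero, Matrix.cons_val_one, Matrix.head_cons,
    Matrix.cons_val_two, Matrix.tail_cons, Finset.mem_singleton, Finset.mem_insert] at h
  simp (config := { decide := true }) only [] at h
  simp only [if_true, if_false] at h
  simp only [wi]
  rw [h]
  simp only [← pow_succ']
  try abel

lemma act_e2 (a b c : ℕ) :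
    act eps2 (wi a b c) = wi (a+1) (b+1) c + wi (a+1) b (c+1) + wi a (b+1) (c+1) := by
  have h := hact 1 ![Polynomial.X ^ a, Polynomial.X ^ b, Polynomial.X ^ c]
  rw [show ((1 : Fin 3) : ℕ) + 1 = 2 from rfl, pc2, Finset.sum_insert (by decide),
    Finset.sum_insert (by decide), Finset.sum_singleton] at h
  simp only [wedge_eq, Matrix.cons_val_zero, Matrix.cons_val_one, Matrix.head_cons,
    Matrix.cons_val_two, Matrix.tail_cons, Finset.mem_singleton, Finset.mem_insert] at h
  simp (config := { decide := true }) only [] at h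
  simp only [if_true, if_false] at h
  simp only [wi]
  rw [h]
  simp only [← pow_succ']
  try abel

lemma act_e3 (a b c : ℕ) :
    act eps3 (wi a b c) = wi (a+1) (b+1) (c+1) := by
  have h := hact 2 ![Polynomial.X ^ a, Polynomial.X ^ b, Polynomial.X ^ c]
  rw [show ((2 : Fin 3) : ℕ) + 1 = 3 from rfl, pc3, Finset.sum_singleton] at h
  simp only [wedge_eq, Matrix.cons_val_zero, Matrix.cons_val_one, Matrix.head_cons,
    Matrix.cons_val_two, Matrix.tail_cons, Finset.mem_singleton, Finset.mem_insert] at h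
  simp (config := { decide := true }) only [] at h
  simp only [if_true, if_false] at h
  simp only [wi]
  rw [h]
  simp only [← pow_succ']
  try abel

lemma actH : ∀ k, act (hpl 0 3 k) (wi 2 1 0) = wi (k+2) 1 0 := by
  intro k
  induction k using Nat.strong_induction_on with
  | _ k ih =>
    match k, ih with
    | 0, _ => rw [hpl_zero, map_one, Module.End.one_apply]
    | 1, _ =>
      rw [hpl_one, act_e1 act hact]
      norm_num [wi_xx, wi_yy]
    | 2, ih =>
      rw [hpl_two', map_sub, map_mul, LinearMap.sub_apply, Module.End.mul_apply,
        ih 1 (by omega), act_e1 act hact, act_e2 act hact]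
      norm_num [wi_xx, wi_yy]
      try abel
    | (m+3), ih =>
      rw [hpl_rec, map_add, map_sub, map_mul, map_mul, map_mul,
        LinearMap.add_apply, LinearMap.sub_apply, Module.End.mul_apply, Module.End.mul_apply,
        Module.End.mul_apply, ih (m+2) (by omega), ih (m+1) (by omega), ih m (by omega),
        act_e1 act hact, act_e2 act hact, act_e3 act hact]
      simp only [add_assoc, Nat.reduceAdd]
      abel

end

lemma contract_triple (d : Module.Dual (B0 0) (Polynomial (B0 0))) (a b c : Polynomial (B0 0)) :
    CliffordAlgebra.contractLeft (Q := (0 : QuadraticForm (B0 0) (Polynomial (B0 0)))) d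
        (ExteriorAlgebra.ι (B0 0) a * ExteriorAlgebra.ι (B0 0) b * ExteriorAlgebra.ι (B0 0) c)
      = d a • (ExteriorAlgebra.ι (B0 0) b * ExteriorAlgebra.ι (B0 0) c)
        - d b • (ExteriorAlgebra.ι (B0 0) a * ExteriorAlgebra.ι (B0 0) c)
        + d c • (ExteriorAlgebra.ι (B0 0) a * ExteriorAlgebra.ι (B0 0) b) := by
  rw [mul_assoc, CliffordAlgebra.contractLeft_ι_mul, CliffordAlgebra.contractLeft_ι_mul,
    CliffordAlgebra.contractLeft_ι]
  rw [mul_sub, mul_smul_comm, ← Algebra.commutes (d c), ← Algebra.smul_def, mul_smul_comm]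
  abel

lemma lhs_wi (i : ℕ) (d : Module.Dual (B0 0) (Polynomial (B0 0))) (a b c : ℕ) :
    ExteriorAlgebra.ι (B0 0) (Polynomial.X ^ i) *
        CliffordAlgebra.contractLeft (Q := (0 : QuadraticForm (B0 0) (Polynomial (B0 0)))) d
          (wi a b c)
      = d (Polynomial.X ^ a) • wi i b c - d (Polynomial.X ^ b) • wi i a c
        + d (Polynomial.X ^ c) • wi i a b := by
  rw [wi, contract_triple, mul_add, mul_sub, mul_smul_comm, mul_smul_comm, mul_smul_comm]
  simp only [wi, mul_assoc]

end Stmt18Aux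

/-- ℰ(z,w⁻¹)·1 = (1/E₃(z))(E₂(z) + (z/w)E₁(z) + z²/w²) in B₃
(all cᵢ = 0), stated coefficientwise: Xⁱ ∧ (∂ʲ ⌟ (X²∧X¹∧X⁰)) equals the
(i,j)-coefficient acting on [X]³₀; in particular the coefficient of z⁵w⁻¹ is
h₄ - h₁h₃ = -Δ_{(3,1)}(H₃). -/
theorem stmt18 (act : Br 0 3 →ₐ[B0 0] Module.End (B0 0) (ExtA 0))
    (hact : ActSpec 0 3 act) :
    (∀ i j : ℕ,
      ExteriorAlgebra.ι (B0 0) (Polynomial.X ^ i) *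
          CliffordAlgebra.contractLeft
            (Q := (0 : QuadraticForm (B0 0) (Polynomial (B0 0))))
            (Polynomial.lcoeff (B0 0) j)
            (wedge 0 3 fun t => Polynomial.X ^ (2 - (t : ℕ))) =
        act (coefRHS i j) (wedge 0 3 fun t => Polynomial.X ^ (2 - (t : ℕ)))) ∧
    coefRHS 5 1 = hpl 0 3 4 - hpl 0 3 1 * hpl 0 3 3 ∧
    coefRHS 5 1 = -Dl 0 3 ![3, 1, 0] := by
  have hv : (wedge 0 3 fun t => Polynomial.X ^ (2 - (t : ℕ))) = wi 2 1 0 := by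
    rw [wedge_eq]
    norm_num [wi]
  refine ⟨?_, ?_, ?_⟩
  · intro i j
    rw [hv, lhs_wi]
    simp only [Polynomial.lcoeff_apply, Polynomial.coeff_X_pow]
    match j with
    | 0 =>
      norm_num
      rw [show coefRHS i 0 = PowerSeries.coeff i (Hser 0 3 * E2ser) by simp [coefRHS],
        coeff_HE2]
      match i with
      | 0 =>
        norm_num [hpl_zero]
        rw [wi_swap12 2 0 1, wi_swap23 2 1 0, neg_neg]
      | 1 =>
        rw [show hpl 0 3 1 - hpl 0 3 1 * (if 1 ≤ 1 then hpl 0 3 (1-1) else 0)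
            + (hpl 0 3 1 ^ 2 - hpl 0 3 2) * (if 2 ≤ 1 then hpl 0 3 (1-2) else 0) = 0 by
              norm_num [hpl_zero],
          map_zero, LinearMap.zero_apply, wi_xyx]
      | (m+2) =>
        simp only [show (1:ℕ) ≤ m+2 by omega, show (2:ℕ) ≤ m+2 by omega, if_true,
          show m+2-1 = m+1 by omega, show m+2-2 = m by omega]
        rw [hpl_two, hpl_one, map_add, map_sub, map_mul, map_mul,
          LinearMap.add_apply, LinearMap.sub_apply, Module.End.mul_apply, Module.End.mul_apply,
          actH act hact, actH act hact, actH act hact,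
          act_e1 act hact, act_e2 act hact]
        simp only [add_assoc, Nat.reduceAdd]
        abel
    | 1 =>
      norm_num
      match i with
      | 0 =>
        rw [show coefRHS 0 1 = 0 by simp [coefRHS], map_zero, LinearMap.zero_apply,
          wi_xyx, neg_zero]
      | (m+1) =>
        rw [show coefRHS (m+1) 1 = PowerSeries.coeff m (Hser 0 3 * E1ser) by
            simp [coefRHS], coeff_HE1]
        match m with
        | 0 =>
          norm_num [hpl_zero]
          rw [wi_swap12 2 1 0, neg_neg]
        | (l+1) =>
          simp only [show (1:ℕ) ≤ l+1 by omega, if_true, show l+1-1 = l by omega]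
          rw [hpl_one, map_sub, map_mul, LinearMap.sub_apply, Module.End.mul_apply,
            actH act hact, actH act hact, act_e1 act hact,
            wi_yy]
          simp only [add_assoc, Nat.reduceAdd]
          abel
    | 2 =>
      norm_num
      match i with
      | 0 =>
        rw [show coefRHS 0 2 = 0 by simp [coefRHS], map_zero, LinearMap.zero_apply,
          wi_xyx]
      | 1 =>
        rw [show coefRHS 1 2 = 0 by simp [coefRHS], map_zero, LinearMap.zero_apply,
          wi_xx]
      | (m+2) =>
        rw [show coefRHS (m+2) 2 = hpl 0 3 m by simp [coefRHS, hpl],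
          actH act hact]
    | (t+3) =>
      rw [if_neg (by omega), if_neg (by omega), if_neg (by omega),
        show coefRHS i (t+3) = 0 by simp [coefRHS], map_zero, LinearMap.zero_apply]
      simp
  · rw [show coefRHS 5 1 = PowerSeries.coeff 4 (Hser 0 3 * E1ser) by simp [coefRHS],
      coeff_HE1]
    norm_num
  · rw [show coefRHS 5 1 = PowerSeries.coeff 4 (Hser 0 3 * E1ser) by simp [coefRHS],
      coeff_HE1, Dl_eq]
    norm_num
    ring
end
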